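/- Let A be an invertible n×n real matrix, b ∈ ℝ^n, and y = A^{-1}b. Consider the linear map DG : M_n(ℝ) × ℝ^n → ℝ^n given by DG(Ȧ, ḃ) = A^{-1}(ḃ − Ȧ y), where M_n(ℝ) carries the Frobenius inner product and ℝ^n the Euclidean inner product. Then the operator norm of DG equals ‖A^{-1}‖ · √(1 + ‖y‖²), and the Frobenius (Hilbert–Schmidt) norm of DG equals ‖A^{-1}‖_F · √(1 + ‖y‖²). -/

import Mathlib

open MeasureTheory Matrix

set_option maxHeartbeats 1000000

private lemma coord_apply {n : ℕ} (M : Matrix (Fin n) (Fin n) ℝ)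
    (v : EuclideanSpace ℝ (Fin n)) (i : Fin n) :
    (Matrix.toEuclideanLin M v) i = ∑ j, M i j * v j := by
  simp [Matrix.toEuclideanLin_apply, Matrix.mulVec, dotProduct]

private lemma norm_sq_eq {n : ℕ} (x : EuclideanSpace ℝ (Fin n)) : ‖x‖ ^ 2 = ∑ i, x i ^ 2 := by
  rw [EuclideanSpace.norm_eq, Real.sq_sqrt]
  · simp [sq_abs]
  · positivity

private lemma norm_toEuclideanLin_le {n : ℕ} (M : Matrix (Fin n) (Fin n) ℝ)
    (v : EuclideanSpace ℝ (Fin n)) :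
    ‖Matrix.toEuclideanLin M v‖ ≤ Real.sqrt (∑ i, ∑ j, M i j ^ 2) * ‖v‖ := by
  have hS0 : (0:ℝ) ≤ ∑ i, ∑ j, M i j ^ 2 := by positivity
  have h1 : ‖Matrix.toEuclideanLin M v‖ ^ 2 ≤ (∑ i, ∑ j, M i j ^ 2) * ‖v‖ ^ 2 := by
    rw [norm_sq_eq]
    calc ∑ i, (Matrix.toEuclideanLin M v) i ^ 2
        = ∑ i, (∑ j, M i j * v j) ^ 2 := by simp [coord_apply]
      _ ≤ ∑ i, (∑ j, M i j ^ 2) * (∑ j, v j ^ 2) := by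
          exact Finset.sum_le_sum fun i _ => Finset.sum_mul_sq_le_sq_mul_sq _ _ _
      _ = (∑ i, ∑ j, M i j ^ 2) * ‖v‖ ^ 2 := by rw [norm_sq_eq, ← Finset.sum_mul]
  have := Real.sqrt_le_sqrt h1
  rwa [Real.sqrt_sq (norm_nonneg _), Real.sqrt_mul hS0, Real.sqrt_sq (norm_nonneg _)] at this

private lemma exists_attains {E F : Type*} [NormedAddCommGroup E] [NormedSpace ℝ E]
    [NormedAddCommGroup F] [NormedSpace ℝ F] [FiniteDimensional ℝ E] [Nontrivial E]
    (f : E →L[ℝ] F) : ∃ u : E, ‖u‖ = 1 ∧ ‖f u‖ = ‖f‖ := by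
  obtain ⟨x0, hx0⟩ := exists_norm_eq E (zero_le_one)
  have hne : (Metric.sphere (0:E) 1).Nonempty := ⟨x0, by simpa [mem_sphere_iff_norm] using hx0⟩
  obtain ⟨u, huS, hmax⟩ := (isCompact_sphere (0:E) 1).exists_isMaxOn hne
    ((f.continuous.norm).continuousOn)
  have hu1 : ‖u‖ = 1 := by simpa [mem_sphere_iff_norm] using huS
  refine ⟨u, hu1, le_antisymm (f.unit_le_opNorm u hu1.le) ?_⟩
  apply f.opNorm_le_bound (norm_nonneg _)
  intro x
  rcases eq_or_ne x 0 with rfl | hx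
  · simp
  · have hnx : (0:ℝ) < ‖x‖ := norm_pos_iff.mpr hx
    have hmem : ‖x‖⁻¹ • x ∈ Metric.sphere (0:E) 1 := by
      simp [mem_sphere_iff_norm, norm_smul, abs_of_pos (inv_pos.mpr hnx),
        inv_mul_cancel₀ hnx.ne']
    have := hmax hmem
    simp only [Set.mem_setOf_eq] at this
    rw [f.map_smul, norm_smul, norm_inv, norm_norm] at this
    calc ‖f x‖ = ‖x‖ * (‖x‖⁻¹ * ‖f x‖) := by field_simp
      _ ≤ ‖x‖ * ‖f u‖ := by exact mul_le_mul_of_nonneg_left this hnx.le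
      _ = ‖f u‖ * ‖x‖ := mul_comm _ _

/-- **Condition matrix of general linear system solving.**
Let `A` be an invertible `n×n` real matrix, `b ∈ ℝ^n`, `y = A⁻¹ b`, and consider
the linear map `DG(Ȧ, ḃ) = A⁻¹(ḃ - Ȧ y)` on `M_n(ℝ) × ℝ^n` with the product of
the Frobenius and the Euclidean inner products.  Then the operator norm of `DG`
(the greatest value of `‖DG(Ȧ, ḃ)‖` over inputs of norm 1) equals
`‖A⁻¹‖ · √(1 + ‖y‖²)`, and the Frobenius (Hilbert–Schmidt) norm of `DG`
(computed over the standard orthonormal basis of the product space) equals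
`‖A⁻¹‖_F · √(1 + ‖y‖²)`. -/
theorem stmt_9 (n : ℕ) (hn : 1 ≤ n) (A : Matrix (Fin n) (Fin n) ℝ)
    (hA : IsUnit A.det) (b : EuclideanSpace ℝ (Fin n))
    (y : EuclideanSpace ℝ (Fin n)) (hy : y = Matrix.toEuclideanLin A⁻¹ b) :
    IsGreatest
      {c : ℝ | ∃ (dA : Matrix (Fin n) (Fin n) ℝ) (db : EuclideanSpace ℝ (Fin n)),
        Real.sqrt ((∑ i, ∑ j, dA i j ^ 2) + ‖db‖ ^ 2) = 1 ∧
        c = ‖Matrix.toEuclideanLin A⁻¹ (db - Matrix.toEuclideanLin dA y)‖}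
      (‖LinearMap.toContinuousLinearMap (Matrix.toEuclideanLin A⁻¹)‖ *
        Real.sqrt (1 + ‖y‖ ^ 2)) ∧
    Real.sqrt
        ((∑ i, ∑ j, ‖Matrix.toEuclideanLin A⁻¹
            ((0 : EuclideanSpace ℝ (Fin n)) -
              Matrix.toEuclideanLin (Matrix.single i j 1) y)‖ ^ 2) +
          ∑ k, ‖Matrix.toEuclideanLin A⁻¹
            (EuclideanSpace.single k 1 - Matrix.toEuclideanLin (0 : Matrix (Fin n) (Fin n) ℝ) y)‖ ^ 2)
      = Real.sqrt (∑ i, ∑ j, (A⁻¹ i j) ^ 2) * Real.sqrt (1 + ‖y‖ ^ 2) := by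
  have hnn : Nonempty (Fin n) := ⟨⟨0, hn⟩⟩
  set t : ℝ := Real.sqrt (1 + ‖y‖ ^ 2) with ht
  have ht2 : t ^ 2 = 1 + ‖y‖ ^ 2 := Real.sq_sqrt (by positivity)
  have htpos : 0 < t := Real.sqrt_pos.mpr (by positivity)
  set F := LinearMap.toContinuousLinearMap (Matrix.toEuclideanLin A⁻¹) with hF
  have hFapp : ∀ x, F x = Matrix.toEuclideanLin A⁻¹ x := fun x => rfl
  have hyn : ‖y‖ ^ 2 = ∑ j, y j ^ 2 := norm_sq_eq y
  constructor
  · constructor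
    · -- membership: sup is attained
      haveI : Nontrivial (EuclideanSpace ℝ (Fin n)) := inferInstance
      obtain ⟨u, hu1, huf⟩ := exists_attains F
      have hu2 : ∑ i, u i ^ 2 = 1 := by rw [← norm_sq_eq, hu1]; norm_num
      refine ⟨Matrix.of fun i j => -(t⁻¹ * u i * y j), t⁻¹ • u, ?_, ?_⟩
      · have hsum : (∑ i, ∑ j, (Matrix.of fun i j => -(t⁻¹ * u i * y j)) i j ^ 2)
            = t⁻¹ ^ 2 * ‖y‖ ^ 2 := by
          calc ∑ i, ∑ j, (Matrix.of fun i j => -(t⁻¹ * u i * y j)) i j ^ 2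
              = ∑ i, ∑ j, (t⁻¹ ^ 2 * u i ^ 2) * (y j ^ 2) := by
                refine Finset.sum_congr rfl fun i _ => Finset.sum_congr rfl fun j _ => ?_
                simp [Matrix.of_apply]; ring
            _ = (∑ i, t⁻¹ ^ 2 * u i ^ 2) * (∑ j, y j ^ 2) := by
                rw [Finset.sum_mul_sum]
            _ = t⁻¹ ^ 2 * ‖y‖ ^ 2 := by
                rw [← Finset.mul_sum, hu2, hyn]; ring
        have hdb : ‖t⁻¹ • u‖ ^ 2 = t⁻¹ ^ 2 := by
          rw [norm_smul, hu1, mul_pow]; simp [abs_of_pos (inv_pos.mpr htpos), sq_abs]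
        rw [hsum, hdb]
        have : t⁻¹ ^ 2 * ‖y‖ ^ 2 + t⁻¹ ^ 2 = 1 := by
          field_simp
          linarith [ht2]
        rw [this, Real.sqrt_one]
      · -- value equals ‖F‖ * t
        have hvec : (t⁻¹ • u - Matrix.toEuclideanLin
            (Matrix.of fun i j => -(t⁻¹ * u i * y j)) y) = t • u := by
          ext i
          simp only [PiLp.sub_apply, PiLp.smul_apply, smul_eq_mul, coord_apply, Matrix.of_apply]
          have hs : ∑ j, -(t⁻¹ * u i * y j) * y j = -(t⁻¹ * u i) * ∑ j, y j ^ 2 := by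
            rw [Finset.mul_sum]
            exact Finset.sum_congr rfl fun j _ => by ring
          rw [hs, ← hyn]
          have : t * t = 1 + ‖y‖ ^ 2 := by nlinarith [ht2]
          field_simp
          linear_combination (-(u i)) * ht2
        rw [hvec, ← hFapp, F.map_smul, norm_smul, Real.norm_eq_abs, abs_of_pos htpos, huf,
          mul_comm]
    · -- upper bound
      rintro c ⟨dA, db, hcond, rfl⟩
      have hS0 : (0:ℝ) ≤ ∑ i, ∑ j, dA i j ^ 2 := by positivity
      have harg : (∑ i, ∑ j, dA i j ^ 2) + ‖db‖ ^ 2 = 1 := by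
        have h0 : (0:ℝ) ≤ (∑ i, ∑ j, dA i j ^ 2) + ‖db‖ ^ 2 := by positivity
        nlinarith [Real.sq_sqrt h0, hcond]
      set s := Real.sqrt (∑ i, ∑ j, dA i j ^ 2) with hs
      have hs2 : s ^ 2 = ∑ i, ∑ j, dA i j ^ 2 := Real.sq_sqrt hS0
      have hkey : ‖db‖ + s * ‖y‖ ≤ t := by
        have hsq : (‖db‖ + s * ‖y‖) ^ 2 ≤ t ^ 2 := by
          nlinarith [sq_nonneg (‖db‖ * ‖y‖ - s), norm_nonneg y, norm_nonneg db,
            Real.sqrt_nonneg (∑ i, ∑ j, dA i j ^ 2)]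
        have := Real.sqrt_le_sqrt hsq
        rwa [Real.sqrt_sq (by positivity), Real.sqrt_sq htpos.le] at this
      calc ‖Matrix.toEuclideanLin A⁻¹ (db - Matrix.toEuclideanLin dA y)‖
          = ‖F (db - Matrix.toEuclideanLin dA y)‖ := by rw [hFapp]
        _ ≤ ‖F‖ * ‖db - Matrix.toEuclideanLin dA y‖ := F.le_opNorm _
        _ ≤ ‖F‖ * t := by
            refine mul_le_mul_of_nonneg_left ?_ (norm_nonneg F)
            calc ‖db - Matrix.toEuclideanLin dA y‖
                ≤ ‖db‖ + ‖Matrix.toEuclideanLin dA y‖ := norm_sub_le _ _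
              _ ≤ ‖db‖ + s * ‖y‖ := by
                  exact add_le_add_right (norm_toEuclideanLin_le dA y) _
              _ ≤ t := hkey
  · -- Frobenius part
    have hS0 : (0:ℝ) ≤ ∑ i, ∑ j, (A⁻¹ i j) ^ 2 := by positivity
    have hterm1 : ∀ i j : Fin n,
        ‖Matrix.toEuclideanLin A⁻¹
          ((0 : EuclideanSpace ℝ (Fin n)) -
            Matrix.toEuclideanLin (Matrix.single i j 1) y)‖ ^ 2
        = y j ^ 2 * ∑ k, (A⁻¹ k i) ^ 2 := by
      intro i j
      rw [zero_sub, (Matrix.toEuclideanLin A⁻¹).map_neg, norm_neg, norm_sq_eq]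
      have hco : ∀ k, (Matrix.toEuclideanLin A⁻¹
          (Matrix.toEuclideanLin (Matrix.single i j 1) y)) k = A⁻¹ k i * y j := by
        intro k
        rw [coord_apply]
        have hE : ∀ l, (Matrix.toEuclideanLin (Matrix.single i j 1) y) l
            = if l = i then y j else 0 := by
          intro l
          rw [coord_apply]
          by_cases hl : l = i
          · subst hl
            simp [Matrix.single, eq_comm]
          · simp [Matrix.single, hl, fun m => show ¬(i = l ∧ j = m) from
              fun h => hl h.1.symm]
        calc ∑ l, A⁻¹ k l * (Matrix.toEuclideanLin (Matrix.single i j 1) y) l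
            = ∑ l, A⁻¹ k l * (if l = i then y j else 0) := by
              exact Finset.sum_congr rfl fun l _ => by rw [hE]
          _ = A⁻¹ k i * y j := by simp
      calc ∑ k, (Matrix.toEuclideanLin A⁻¹
            (Matrix.toEuclideanLin (Matrix.single i j 1) y)) k ^ 2
          = ∑ k, (A⁻¹ k i * y j) ^ 2 := Finset.sum_congr rfl fun k _ => by rw [hco]
        _ = y j ^ 2 * ∑ k, (A⁻¹ k i) ^ 2 := by rw [Finset.mul_sum]; exact Finset.sum_congr rfl fun k _ => by ring
    have hterm2 : ∀ k : Fin n,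
        ‖Matrix.toEuclideanLin A⁻¹
          (EuclideanSpace.single k 1 -
            Matrix.toEuclideanLin (0 : Matrix (Fin n) (Fin n) ℝ) y)‖ ^ 2
        = ∑ i, (A⁻¹ i k) ^ 2 := by
      intro k
      have h0 : Matrix.toEuclideanLin (0 : Matrix (Fin n) (Fin n) ℝ) y = 0 := by
        rw [map_zero]; rfl
      rw [h0, sub_zero, norm_sq_eq]
      refine Finset.sum_congr rfl fun i _ => ?_
      rw [coord_apply]
      congr 1
      simp [EuclideanSpace.single_apply]
    have e1 : (∑ i, ∑ j, ‖Matrix.toEuclideanLin A⁻¹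
            ((0 : EuclideanSpace ℝ (Fin n)) -
              Matrix.toEuclideanLin (Matrix.single i j 1) y)‖ ^ 2)
        = ‖y‖ ^ 2 * ∑ i, ∑ j, (A⁻¹ i j) ^ 2 := by
      calc (∑ i, ∑ j, ‖Matrix.toEuclideanLin A⁻¹
            ((0 : EuclideanSpace ℝ (Fin n)) -
              Matrix.toEuclideanLin (Matrix.single i j 1) y)‖ ^ 2)
          = ∑ i, ∑ j, y j ^ 2 * ∑ k, (A⁻¹ k i) ^ 2 := by
            exact Finset.sum_congr rfl fun i _ => Finset.sum_congr rfl fun j _ => hterm1 i j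
        _ = ∑ i, (∑ k, (A⁻¹ k i) ^ 2) * ∑ j, y j ^ 2 := by
            refine Finset.sum_congr rfl fun i _ => ?_
            rw [← Finset.sum_mul, mul_comm]
        _ = (∑ i, ∑ k, (A⁻¹ k i) ^ 2) * ∑ j, y j ^ 2 := by rw [Finset.sum_mul]
        _ = ‖y‖ ^ 2 * ∑ i, ∑ j, (A⁻¹ i j) ^ 2 := by
            rw [Finset.sum_comm, ← hyn]; ring
    have e2 : (∑ k, ‖Matrix.toEuclideanLin A⁻¹
            (EuclideanSpace.single k 1 -
              Matrix.toEuclideanLin (0 : Matrix (Fin n) (Fin n) ℝ) y)‖ ^ 2)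
        = ∑ i, ∑ j, (A⁻¹ i j) ^ 2 := by
      rw [Finset.sum_congr rfl fun k _ => hterm2 k, Finset.sum_comm]
    rw [e1, e2, ← Real.sqrt_mul hS0]
    congr 1
    ring
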